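/- Suppose K := A a² + D(b² − c²) < 0 and set k = K/(2Dbc), x̂ = √(1/2 − k²/(2√(k² + k⁴))), and S(k) = (Dbc(k + √(1/(1+k²)) − k³/√(k² + k⁴)) + D c²) / (1/2 − k²/(2√(k² + k⁴))). Then: (i) if A a² + C a² ≤ 2Dbck + D c², then x = 1 is a maximizer of γ on [0,1] and the maximum value is A a² + C a²; (ii) if 2Dbck + D c² < A a² + C a² < S(k), then x = c√D / √((a√C − b√D)² + D c²) is a maximizer of γ on [0,1] and the maximum value is D(A + C)a²c² / ((a√C − b√D)² + D c²); (iii) if A a² + C a² ≥ S(k), then x = x̂ is a maximizer of γ on [0,1] and the maximum value is Dbc(k + √(1/(1+k²)) − k³/√(k² + k⁴)) + D c². -/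

import Mathlib

private lemma sqrt_conv {x : ℝ} (hx0 : 0 ≤ x) (hx1 : x ≤ 1) :
    Real.sqrt (1/4 - (x^2 - 1/2)^2) = x * Real.sqrt (1 - x^2) := by
  rw [show 1/4 - (x^2 - 1/2)^2 = x^2 * (1 - x^2) by ring, Real.sqrt_mul (sq_nonneg x),
    Real.sqrt_sq hx0]

private lemma cauchy_half (k u v : ℝ) (hv : 0 ≤ v) (huv : u^2 + v^2 = 1/4) :
    k*u + v ≤ Real.sqrt (1 + k^2) / 2 := by
  have hR0 : 0 ≤ Real.sqrt (1 + k^2) := Real.sqrt_nonneg _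
  have hR2 : Real.sqrt (1 + k^2)^2 = 1 + k^2 := Real.sq_sqrt (by positivity)
  nlinarith [sq_nonneg (u - k*v), sq_nonneg (Real.sqrt (1+k^2)/2 + (k*u+v)),
    sq_nonneg (Real.sqrt (1+k^2)/2 - (k*u+v))]

private lemma side_cond {k w : ℝ} (hk : k < 0) (hw2 : w ≤ 1/2)
    (hw : k / (2 * Real.sqrt (1 + k^2)) ≤ w) :
    k * Real.sqrt (1/4 - w^2) ≤ w := by
  have hR0 : 0 < Real.sqrt (1 + k^2) := Real.sqrt_pos.mpr (by positivity)
  have hR2 : Real.sqrt (1 + k^2)^2 = 1 + k^2 := Real.sq_sqrt (by positivity)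
  have hRk : -k < Real.sqrt (1 + k^2) := by nlinarith
  have hwlow : -(1/2) < w := by
    have : -(1/2) < k / (2 * Real.sqrt (1 + k^2)) := by
      rw [neg_lt, ← neg_div]
      rw [div_lt_iff₀ (by linarith : (0:ℝ) < 2 * Real.sqrt (1 + k^2))]
      nlinarith
    linarith
  have hv0 : 0 ≤ Real.sqrt (1/4 - w^2) := Real.sqrt_nonneg _
  have hv2 : Real.sqrt (1/4 - w^2)^2 = 1/4 - w^2 := Real.sq_sqrt (by nlinarith)
  rcases le_or_gt 0 w with h0 | h0
  · nlinarith [mul_nonneg hv0 (le_of_lt (neg_pos.mpr hk))]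
  · -- w < 0, k/(2R) ≤ w < 0 so w² ≤ k²/(4R²), want k*v ≤ w i.e. -w ≤ -k*v
    have h1 : w^2 * (2 * Real.sqrt (1+k^2))^2 ≤ k^2 := by
      have h2 : -w ≤ -k / (2 * Real.sqrt (1+k^2)) := by
        rw [neg_div]; linarith
      have h3 : (-w) * (2 * Real.sqrt (1+k^2)) ≤ -k := by
        rw [← le_div_iff₀ (by linarith : (0:ℝ) < 2 * Real.sqrt (1+k^2))]; exact h2
      nlinarith [mul_nonneg (le_of_lt (neg_pos.mpr h0)) (by linarith : (0:ℝ) ≤ 2 * Real.sqrt (1+k^2))]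
    -- k²v² = k²/4 - k²w² ≥ w² since w²(1+k²) ≤ k²/4
    nlinarith [hv2, sq_nonneg (w - k * Real.sqrt (1/4 - w^2)), mul_nonneg (le_of_lt (neg_pos.mpr hk)) hv0]


private lemma lemB {k u us : ℝ} (hk : k < 0)
    (hus : k / (2*Real.sqrt (1+k^2)) ≤ us)
    (huus : us ≤ u) (hu2 : u ≤ 1/2) :
    k*u + Real.sqrt (1/4 - u^2) ≤ k*us + Real.sqrt (1/4 - us^2) := by
  have hR0 : 0 < Real.sqrt (1 + k^2) := Real.sqrt_pos.mpr (by positivity)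
  have hR2 : Real.sqrt (1 + k^2)^2 = 1 + k^2 := Real.sq_sqrt (by positivity)
  have hRk : -k < Real.sqrt (1 + k^2) := by nlinarith
  have huslow : -(1/2) < us := by
    have : -(1/2) < k / (2 * Real.sqrt (1 + k^2)) := by
      rw [neg_lt, ← neg_div, div_lt_iff₀ (by linarith : (0:ℝ) < 2 * Real.sqrt (1 + k^2))]
      nlinarith
    linarith
  have hus2 : us ≤ 1/2 := le_trans huus hu2
  have hv0 : 0 ≤ Real.sqrt (1/4 - u^2) := Real.sqrt_nonneg _
  have hvs0 : 0 ≤ Real.sqrt (1/4 - us^2) := Real.sqrt_nonneg _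
  have hv2 : Real.sqrt (1/4 - u^2)^2 = 1/4 - u^2 := Real.sq_sqrt (by nlinarith)
  have hvs2 : Real.sqrt (1/4 - us^2)^2 = 1/4 - us^2 := Real.sq_sqrt (by nlinarith)
  have hside1 : k * Real.sqrt (1/4 - u^2) ≤ u := side_cond hk hu2 (le_trans hus huus)
  have hside2 : k * Real.sqrt (1/4 - us^2) ≤ us := side_cond hk hus2 hus
  revert hv0 hvs0 hv2 hvs2 hside1 hside2
  generalize Real.sqrt (1/4 - u^2) = v
  generalize Real.sqrt (1/4 - us^2) = vs
  intro hv0 hvs0 hv2 hvs2 hside1 hside2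
  rcases le_or_gt (v + vs) 0 with hsum | hsum
  · have hv : v = 0 := by linarith
    have hvs : vs = 0 := by linarith
    rw [hv, hvs]
    nlinarith [mul_nonneg (le_of_lt (neg_pos.mpr hk)) (sub_nonneg.mpr huus)]
  · nlinarith [mul_nonneg (sub_nonneg.mpr huus)
        (sub_nonneg.mpr (by linarith : k * (v + vs) ≤ u + us)),
      mul_pos hsum hsum]

private lemma lemC_core {Q P c0 uh w vU vW : ℝ} (hQ : 0 < Q) (hP : 0 < P)
    (hw : -(1/2) ≤ w) (hwu : w ≤ uh) (huh : uh ≤ 1/2)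
    (hvW0 : 0 ≤ vW) (hvW2 : vW^2 = 1/4 - w^2)
    (hvU0 : 0 ≤ vU) (hvU2 : vU^2 = 1/4 - uh^2)
    (h0 : 0 < Q/2 + c0)
    (h1 : 0 < -Q*uh + 2*P*vU + c0) :
    0 < -Q*w + 2*P*vW + c0 := by
  rcases eq_or_lt_of_le (le_trans hw hwu) with heq | hpos
  · have hwuh : w = uh := by linarith [heq]
    subst hwuh
    have : vW = vU := by nlinarith
    rw [this]; exact h1
  · have hd : 0 < uh + 1/2 := by linarith
    obtain ⟨μ, hμ0, hμ1, hwe⟩ : ∃ μ, 0 ≤ μ ∧ μ ≤ 1 ∧ w = uh - μ*(uh + 1/2) :=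
      ⟨(uh - w)/(uh + 1/2), div_nonneg (by linarith) (by linarith),
        by rw [div_le_one hd]; linarith,
        by rw [div_mul_cancel₀ _ hd.ne']; ring⟩
    have hμ1' : (0:ℝ) ≤ 1 - μ := by linarith
    have key : (1 - μ)*vU ≤ vW := by
      have hsq : ((1 - μ)*vU)^2 ≤ vW^2 := by
        rw [hvW2, mul_pow, hvU2, hwe]
        nlinarith [mul_nonneg (mul_nonneg hμ0 hμ1') hd.le]
      nlinarith [mul_nonneg hμ1' hvU0, hvW0]
    have h2P : (0:ℝ) ≤ 2*P := by linarith
    have e0 : μ*(Q/2 + c0) + (1 - μ)*(-Q*uh + 2*P*vU + c0)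
        = -Q*w + 2*P*((1-μ)*vU) + c0 := by rw [hwe]; ring
    have e1 : μ*(Q/2 + c0) + (1 - μ)*(-Q*uh + 2*P*vU + c0)
        ≤ -Q*w + 2*P*vW + c0 := by
      rw [e0]
      have := mul_le_mul_of_nonneg_left key h2P
      linarith
    rcases le_total (Q/2 + c0) (-Q*uh + 2*P*vU + c0) with hAB | hAB
    · nlinarith [mul_nonneg hμ1' (sub_nonneg.mpr hAB)]
    · nlinarith [mul_nonneg hμ0 (sub_nonneg.mpr hAB)]



set_option maxHeartbeats 1000000 in
private theorem helper (a b c A C D k xhat S : ℝ) (γ : ℝ → ℝ)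
    (hγ : γ = fun x => min ((A * a ^ 2 + C * a ^ 2) * x ^ 2)
        ((A * a ^ 2 + D * (b ^ 2 - c ^ 2)) * x ^ 2
          + 2 * D * b * c * x * Real.sqrt (1 - x ^ 2) + D * c ^ 2))
    (hk : k = (A * a ^ 2 + D * (b ^ 2 - c ^ 2)) / (2 * D * b * c))
    (hxhat : xhat = Real.sqrt (1 / 2 - k ^ 2 / (2 * Real.sqrt (k ^ 2 + k ^ 4))))
    (hS : S = (D * b * c * (k + Real.sqrt (1 / (1 + k ^ 2))
        - k ^ 3 / Real.sqrt (k ^ 2 + k ^ 4)) + D * c ^ 2)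
      / (1 / 2 - k ^ 2 / (2 * Real.sqrt (k ^ 2 + k ^ 4))))
    (ha : 0 < a) (hb : 0 < b) (hc : 0 < c) (hA : 0 < A) (hC : 0 < C) (hD : 0 < D)
    (hK : A * a ^ 2 + D * (b ^ 2 - c ^ 2) < 0) :
    (A * a ^ 2 + C * a ^ 2 ≤ 2 * D * b * c * k + D * c ^ 2 →
      (1 : ℝ) ∈ Set.Icc (0:ℝ) 1 ∧ IsMaxOn γ (Set.Icc (0:ℝ) 1) 1 ∧
      γ 1 = A * a ^ 2 + C * a ^ 2) ∧
    (2 * D * b * c * k + D * c ^ 2 < A * a ^ 2 + C * a ^ 2 ∧ A * a ^ 2 + C * a ^ 2 < S →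
      c * Real.sqrt D / Real.sqrt ((a * Real.sqrt C - b * Real.sqrt D) ^ 2 + D * c ^ 2)
        ∈ Set.Icc (0:ℝ) 1 ∧
      IsMaxOn γ (Set.Icc (0:ℝ) 1)
        (c * Real.sqrt D / Real.sqrt ((a * Real.sqrt C - b * Real.sqrt D) ^ 2 + D * c ^ 2)) ∧
      γ (c * Real.sqrt D / Real.sqrt ((a * Real.sqrt C - b * Real.sqrt D) ^ 2 + D * c ^ 2))
        = D * (A + C) * a ^ 2 * c ^ 2
            / ((a * Real.sqrt C - b * Real.sqrt D) ^ 2 + D * c ^ 2)) ∧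
    (S ≤ A * a ^ 2 + C * a ^ 2 →
      xhat ∈ Set.Icc (0:ℝ) 1 ∧ IsMaxOn γ (Set.Icc (0:ℝ) 1) xhat ∧
      γ xhat = D * b * c * (k + Real.sqrt (1 / (1 + k ^ 2))
        - k ^ 3 / Real.sqrt (k ^ 2 + k ^ 4)) + D * c ^ 2) := by
  have hP : 0 < D * b * c := by positivity
  have hbc : 0 < 2 * D * b * c := by positivity
  have hkneg : k < 0 := by rw [hk]; exact div_neg_of_neg_of_pos hK hbc
  have h2Pk : 2 * D * b * c * k = A * a ^ 2 + D * (b ^ 2 - c ^ 2) := by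
    rw [hk]; field_simp
  have hR0 : 0 < Real.sqrt (1 + k^2) := Real.sqrt_pos.mpr (by positivity)
  have hR2 : Real.sqrt (1 + k^2)^2 = 1 + k^2 := Real.sq_sqrt (by positivity)
  have hRk : -k < Real.sqrt (1 + k^2) := by nlinarith
  have hkne : k ≠ 0 := ne_of_lt hkneg
  have hkk4 : Real.sqrt (k ^ 2 + k ^ 4) = -k * Real.sqrt (1 + k^2) := by
    rw [show k ^ 2 + k ^ 4 = k^2 * (1 + k^2) by ring, Real.sqrt_mul (sq_nonneg k),
      Real.sqrt_sq_eq_abs, abs_of_neg hkneg]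
  have hinv : Real.sqrt (1 / (1 + k ^ 2)) = 1 / Real.sqrt (1 + k^2) := by
    rw [one_div, Real.sqrt_inv, one_div]
  have hednf : 1 / 2 - k ^ 2 / (2 * Real.sqrt (k ^ 2 + k ^ 4))
      = 1/2 + k / (2 * Real.sqrt (1 + k^2)) := by
    rw [hkk4]
    field_simp
    ring
  have he0 : 0 < 1/2 + k / (2 * Real.sqrt (1 + k^2)) := by
    rw [show 1/2 + k / (2 * Real.sqrt (1 + k^2))
      = (Real.sqrt (1 + k^2) + k)/(2 * Real.sqrt (1 + k^2)) by field_simp]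
    exact div_pos (by linarith) (by linarith)
  have hkR_neg : k / (2 * Real.sqrt (1 + k^2)) < 0 :=
    div_neg_of_neg_of_pos hkneg (by linarith)
  have he1 : 1/2 + k / (2 * Real.sqrt (1 + k^2)) < 1 := by linarith
  have hxhat2 : xhat^2 = 1/2 + k / (2 * Real.sqrt (1 + k^2)) := by
    rw [hxhat, hednf, Real.sq_sqrt he0.le]
  have hxhat0 : 0 ≤ xhat := hxhat ▸ Real.sqrt_nonneg _
  have hxhat1 : xhat ≤ 1 := by
    rw [hxhat, hednf]; exact Real.sqrt_le_one.mpr (by linarith)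
  have hN : D * b * c * (k + Real.sqrt (1 / (1 + k ^ 2))
        - k ^ 3 / Real.sqrt (k ^ 2 + k ^ 4)) + D * c ^ 2
      = D * b * c * (k + Real.sqrt (1 + k^2)) + D * c ^ 2 := by
    rw [hinv, hkk4]
    field_simp
    linear_combination (-b) * hR2
  have hSG : S = (D * b * c * (k + Real.sqrt (1 + k^2)) + D * c ^ 2)
      / (1/2 + k / (2 * Real.sqrt (1 + k^2))) := by
    rw [hS, hednf, hN]
  have hglob : ∀ x : ℝ, 0 ≤ x → x ≤ 1 →
      (A * a ^ 2 + D * (b ^ 2 - c ^ 2)) * x ^ 2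
          + 2 * D * b * c * x * Real.sqrt (1 - x ^ 2) + D * c ^ 2
        ≤ D * b * c * (k + Real.sqrt (1 + k^2)) + D * c ^ 2 := by
    intro x hx0 hx1
    have h1x : 0 ≤ 1 - x^2 := by nlinarith
    have hs2 : Real.sqrt (1 - x^2)^2 = 1 - x^2 := Real.sq_sqrt h1x
    have hv0 : 0 ≤ x * Real.sqrt (1 - x^2) := by positivity
    have huv : (x^2 - 1/2)^2 + (x * Real.sqrt (1 - x^2))^2 = 1/4 := by linear_combination (x^2)*hs2
    have hcs := cauchy_half k (x^2 - 1/2) (x * Real.sqrt (1 - x^2)) hv0 huv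
    have h2 : 2*D*b*c*(k*(x^2-1/2) + x * Real.sqrt (1 - x^2))
        ≤ 2*D*b*c*(Real.sqrt (1 + k^2)/2) :=
      mul_le_mul_of_nonneg_left hcs (by positivity)
    rw [← h2Pk]
    linarith [h2]
  refine ⟨?_, ?_, ?_⟩
  · -- Part (i)
    intro h
    have hγ1 : γ 1 = A * a ^ 2 + C * a ^ 2 := by
      rw [hγ]
      simp only
      norm_num [Real.sqrt_zero]
      linarith [h2Pk]
    refine ⟨Set.mem_Icc.mpr ⟨by norm_num, le_refl 1⟩, ?_, hγ1⟩
    rw [isMaxOn_iff]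
    intro x hx
    obtain ⟨hx0, hx1⟩ := Set.mem_Icc.mp hx
    rw [hγ1, hγ]
    simp only
    refine le_trans (min_le_left _ _) ?_
    have hx2 : x^2 ≤ 1 := by nlinarith
    have hW0 : (0:ℝ) ≤ A*a^2+C*a^2 := by positivity
    nlinarith [mul_le_mul_of_nonneg_left hx2 hW0]
  · -- Part (ii)
    rintro ⟨h1, h2⟩
    have hsC0 : 0 < Real.sqrt C := Real.sqrt_pos.mpr hC
    have hsD0 : 0 < Real.sqrt D := Real.sqrt_pos.mpr hD
    have hsC2 : Real.sqrt C ^ 2 = C := Real.sq_sqrt hC.le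
    have hsD2 : Real.sqrt D ^ 2 = D := Real.sq_sqrt hD.le
    have hDb : D * b ^ 2 < C * a ^ 2 := by linarith [h2Pk]
    have ht : 0 < a * Real.sqrt C - b * Real.sqrt D := by
      nlinarith [mul_pos ha hsC0, mul_pos hb hsD0]
    have hE0 : 0 < (a * Real.sqrt C - b * Real.sqrt D) ^ 2 + D * c ^ 2 := by positivity
    have hsE0 : 0 < Real.sqrt ((a * Real.sqrt C - b * Real.sqrt D) ^ 2 + D * c ^ 2) :=
      Real.sqrt_pos.mpr hE0
    have hsE2 : Real.sqrt ((a * Real.sqrt C - b * Real.sqrt D) ^ 2 + D * c ^ 2) ^ 2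
        = (a * Real.sqrt C - b * Real.sqrt D) ^ 2 + D * c ^ 2 := Real.sq_sqrt hE0.le
    set t := a * Real.sqrt C - b * Real.sqrt D with htdef
    set E := t ^ 2 + D * c ^ 2 with hEdef
    set sE := Real.sqrt E with hsEdef
    set xs := c * Real.sqrt D / sE with hxsdef
    have hxs0 : 0 ≤ xs := by positivity
    have hxs2 : xs ^ 2 = D * c ^ 2 / E := by
      rw [hxsdef, div_pow, hsE2, mul_pow, hsD2]; ring_nf
    have hxs1 : xs ≤ 1 := by
      rw [hxsdef, div_le_one hsE0]
      have hcd : c * Real.sqrt D = Real.sqrt (D * c ^ 2) := by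
        rw [show D * c ^ 2 = c ^ 2 * D by ring, Real.sqrt_mul (sq_nonneg c), Real.sqrt_sq hc.le]
      rw [hcd, hsEdef, hEdef]
      exact Real.sqrt_le_sqrt (le_add_of_nonneg_left (sq_nonneg t))
    have h1xs : 1 - xs ^ 2 = t ^ 2 / E := by
      rw [hxs2]; field_simp; rw [hEdef]; ring
    have hsqrt1xs : Real.sqrt (1 - xs ^ 2) = t / sE := by
      rw [h1xs, hsEdef, Real.sqrt_div (sq_nonneg t), Real.sqrt_sq ht.le]
    have hxy : xs * Real.sqrt (1 - xs ^ 2) = c * Real.sqrt D * t / E := by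
      rw [hxsdef, hsqrt1xs, div_mul_div_comm, ← hsE2]; ring_nf
    have hkey : A * a ^ 2 + C * a ^ 2
        = (A * a ^ 2 + D * (b ^ 2 - c ^ 2)) + 2 * b * Real.sqrt D * t + E := by
      rw [hEdef, htdef]; linear_combination (-(a^2)) * hsC2 + (b^2) * hsD2
    have hgxs : (A * a ^ 2 + D * (b ^ 2 - c ^ 2)) * xs ^ 2
          + 2 * D * b * c * xs * Real.sqrt (1 - xs ^ 2) + D * c ^ 2
        = (A * a ^ 2 + C * a ^ 2) * xs ^ 2 := by
      rw [show 2 * D * b * c * xs * Real.sqrt (1 - xs ^ 2)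
          = 2 * D * b * c * (xs * Real.sqrt (1 - xs ^ 2)) by ring, hxy, hxs2]
      field_simp
      linear_combination (D * c ^ 2) * hkey + (a^2*D*c^2 + a^2) * hsC2 + (-(D*b^2*c^2) - b^2) * hsD2
    have hγxs : γ xs = (A * a ^ 2 + C * a ^ 2) * xs ^ 2 := by
      rw [hγ]
      simp only
      rw [hgxs, min_self]
    -- the crossing point is at or beyond the peak of g
    have hQ0 : 0 < A * a ^ 2 + C * a ^ 2 - (A * a ^ 2 + D * (b ^ 2 - c ^ 2)) := by
      have : 0 < A * a ^ 2 + C * a ^ 2 := by positivity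
      linarith
    have hhat14 : 1/4 - (k / (2 * Real.sqrt (1 + k^2))) ^ 2
        = (1 / (2 * Real.sqrt (1 + k^2))) ^ 2 := by
      field_simp
      linear_combination (4:ℝ) * hR2
    have hhat_sqrt : Real.sqrt (1/4 - (k / (2 * Real.sqrt (1 + k^2))) ^ 2)
        = 1 / (2 * Real.sqrt (1 + k^2)) := by
      rw [hhat14]; exact Real.sqrt_sq (by positivity)
    have hWe : (A * a ^ 2 + C * a ^ 2) * (1/2 + k / (2 * Real.sqrt (1 + k^2)))
        < D * b * c * (k + Real.sqrt (1 + k^2)) + D * c ^ 2 := by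
      rw [hSG] at h2
      exact (lt_div_iff₀ he0).mp h2
    have hhat_pos : 0 < -(A * a ^ 2 + C * a ^ 2 - (A * a ^ 2 + D * (b ^ 2 - c ^ 2)))
          * (k / (2 * Real.sqrt (1 + k^2)))
          + 2 * (D * b * c) * Real.sqrt (1/4 - (k / (2 * Real.sqrt (1 + k^2))) ^ 2)
          + (D * c ^ 2 - (A * a ^ 2 + C * a ^ 2 - (A * a ^ 2 + D * (b ^ 2 - c ^ 2))) / 2) := by
      rw [hhat_sqrt]
      have hval : -(A * a ^ 2 + C * a ^ 2 - (A * a ^ 2 + D * (b ^ 2 - c ^ 2)))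
            * (k / (2 * Real.sqrt (1 + k^2)))
          + 2 * (D * b * c) * (1 / (2 * Real.sqrt (1 + k^2)))
          + (D * c ^ 2 - (A * a ^ 2 + C * a ^ 2 - (A * a ^ 2 + D * (b ^ 2 - c ^ 2))) / 2)
          = (D * b * c * (k + Real.sqrt (1 + k^2)) + D * c ^ 2)
            - (A * a ^ 2 + C * a ^ 2) * (1/2 + k / (2 * Real.sqrt (1 + k^2))) := by
        rw [← h2Pk]
        field_simp
        ring_nf
        linear_combination (-(2*D*b*c)) * hR2
      rw [hval]
      linarith [hWe]
    have hucond : k / (2 * Real.sqrt (1 + k^2)) ≤ xs ^ 2 - 1/2 := by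
      by_contra hcon
      push_neg at hcon
      have happ := lemC_core (Q := A * a ^ 2 + C * a ^ 2 - (A * a ^ 2 + D * (b ^ 2 - c ^ 2)))
        (P := D * b * c) (c0 := D * c ^ 2 - (A * a ^ 2 + C * a ^ 2 - (A * a ^ 2 + D * (b ^ 2 - c ^ 2))) / 2)
        (uh := k / (2 * Real.sqrt (1 + k^2))) (w := xs ^ 2 - 1/2)
        (vU := Real.sqrt (1/4 - (k / (2 * Real.sqrt (1 + k^2))) ^ 2))
        (vW := Real.sqrt (1/4 - (xs ^ 2 - 1/2) ^ 2))
        hQ0 hP (by linarith only [sq_nonneg xs]) hcon.le (by linarith only [hkR_neg])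
        (Real.sqrt_nonneg _)
        (Real.sq_sqrt (by
          have hxsle : xs ^ 2 ≤ 1 := by
            calc xs ^ 2 ≤ 1 ^ 2 := pow_le_pow_left₀ hxs0 hxs1 2
            _ = 1 := one_pow 2
          have h14 : (xs ^ 2 - 1/2) ^ 2 ≤ (1/2) ^ 2 :=
            sq_le_sq' (by linarith only [sq_nonneg xs]) (by linarith only [hxsle])
          linarith only [h14]))
        (Real.sqrt_nonneg _)
        (Real.sq_sqrt (by rw [hhat14]; positivity))
        (by have hdc : (0:ℝ) < D * c ^ 2 := by positivity
            linarith only [hdc]) hhat_pos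
      rw [sqrt_conv hxs0 hxs1] at happ
      linarith only [hgxs, happ]
    refine ⟨Set.mem_Icc.mpr ⟨hxs0, hxs1⟩, ?_, ?_⟩
    · rw [isMaxOn_iff]
      intro x hx
      obtain ⟨hx0, hx1⟩ := Set.mem_Icc.mp hx
      rw [hγxs, hγ]
      simp only
      rcases le_or_gt x xs with hle | hgt
      · refine le_trans (min_le_left _ _) ?_
        have hxx : x ^ 2 ≤ xs ^ 2 := pow_le_pow_left₀ hx0 hle 2
        exact mul_le_mul_of_nonneg_left hxx (by positivity)
      · refine le_trans (min_le_right _ _) ?_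
        have hlemB := lemB (k := k) (u := x ^ 2 - 1/2) (us := xs ^ 2 - 1/2) hkneg
          hucond (by linarith only [pow_le_pow_left₀ hxs0 hgt.le 2])
          (by linarith only [pow_le_pow_left₀ hx0 hx1 2, (one_pow 2 : (1:ℝ)^2 = 1)])
        rw [sqrt_conv hx0 hx1, sqrt_conv hxs0 hxs1] at hlemB
        have hmul := mul_le_mul_of_nonneg_left hlemB hbc.le
        rw [← hgxs, ← h2Pk]
        linarith only [hmul]
    · rw [hγxs, hxs2]
      rw [mul_div_assoc']
      congr 1
      ring
  · -- Part (iii)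
    intro h
    have hWe : D*b*c*(k + Real.sqrt (1+k^2)) + D*c^2
        ≤ (A*a^2+C*a^2)*(1/2 + k/(2*Real.sqrt (1+k^2))) := by
      rw [hSG] at h
      exact (div_le_iff₀ he0).mp h
    have h1e : 1 - xhat^2 = 1/2 - k/(2*Real.sqrt (1+k^2)) := by rw [hxhat2]; ring
    have hxe : xhat = Real.sqrt (1/2 + k/(2*Real.sqrt (1+k^2))) := by rw [hxhat, hednf]
    have hxy : xhat * Real.sqrt (1 - xhat^2) = 1/(2*Real.sqrt (1+k^2)) := by
      rw [h1e, hxe, ← Real.sqrt_mul he0.le]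
      rw [show (1/2 + k/(2*Real.sqrt (1+k^2)))*(1/2 - k/(2*Real.sqrt (1+k^2)))
        = (1/(2*Real.sqrt (1+k^2)))^2 by field_simp; linear_combination hR2]
      exact Real.sqrt_sq (by positivity)
    have hgx : (A*a^2 + D*(b^2-c^2))*xhat^2 + 2*D*b*c*xhat*Real.sqrt (1-xhat^2) + D*c^2
        = D*b*c*(k + Real.sqrt (1+k^2)) + D*c^2 := by
      rw [show 2*D*b*c*xhat*Real.sqrt (1-xhat^2) = 2*D*b*c*(xhat*Real.sqrt (1-xhat^2)) by ring,
        hxy, ← h2Pk, hxhat2]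
      field_simp
      linear_combination (-b) * hR2
    have hγx : γ xhat = D*b*c*(k + Real.sqrt (1+k^2)) + D*c^2 := by
      rw [hγ]
      simp only
      rw [show (A * a ^ 2 + D * (b ^ 2 - c ^ 2)) * xhat ^ 2
          + 2 * D * b * c * xhat * Real.sqrt (1 - xhat ^ 2) + D * c ^ 2
          = D*b*c*(k + Real.sqrt (1+k^2)) + D*c^2 from hgx]
      refine min_eq_right ?_
      rw [hxhat2]
      linarith [hWe]
    refine ⟨Set.mem_Icc.mpr ⟨hxhat0, hxhat1⟩, ?_, by rw [hγx]; exact hN.symm⟩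
    rw [isMaxOn_iff]
    intro x hx
    obtain ⟨hx0, hx1⟩ := Set.mem_Icc.mp hx
    rw [hγx, hγ]
    simp only
    exact le_trans (min_le_right _ _) (hglob x hx0 hx1)

/-- Theorem 3 (Scenario `K = A a² + D(b² − c²) < 0`) of the suboptimal energy-beamforming
problem `P5`: the maximizer of
`γ(x) = min ((A a² + C a²) x², (A a² + D(b² − c²)) x² + 2 D b c x √(1 − x²) + D c²)`
over `[0,1]` in the three cases, with `k = K/(2Dbc)`,
`x̂ = √(1/2 − k²/(2√(k² + k⁴)))` and threshold `S(k)`. -/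
theorem beamforming_scenario_neg (a b c A C D : ℝ)
    (ha : 0 < a) (hb : 0 < b) (hc : 0 < c) (hA : 0 < A) (hC : 0 < C) (hD : 0 < D)
    (hK : A * a ^ 2 + D * (b ^ 2 - c ^ 2) < 0) :
    (let γ : ℝ → ℝ := fun x =>
      min ((A * a ^ 2 + C * a ^ 2) * x ^ 2)
        ((A * a ^ 2 + D * (b ^ 2 - c ^ 2)) * x ^ 2
          + 2 * D * b * c * x * Real.sqrt (1 - x ^ 2) + D * c ^ 2);
    let k : ℝ := (A * a ^ 2 + D * (b ^ 2 - c ^ 2)) / (2 * D * b * c);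
    let xhat : ℝ := Real.sqrt (1 / 2 - k ^ 2 / (2 * Real.sqrt (k ^ 2 + k ^ 4)));
    let S : ℝ := (D * b * c * (k + Real.sqrt (1 / (1 + k ^ 2))
        - k ^ 3 / Real.sqrt (k ^ 2 + k ^ 4)) + D * c ^ 2)
      / (1 / 2 - k ^ 2 / (2 * Real.sqrt (k ^ 2 + k ^ 4)));
    (A * a ^ 2 + C * a ^ 2 ≤ 2 * D * b * c * k + D * c ^ 2 →
      (1 : ℝ) ∈ Set.Icc (0:ℝ) 1 ∧ IsMaxOn γ (Set.Icc (0:ℝ) 1) 1 ∧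
      γ 1 = A * a ^ 2 + C * a ^ 2) ∧
    (2 * D * b * c * k + D * c ^ 2 < A * a ^ 2 + C * a ^ 2 ∧ A * a ^ 2 + C * a ^ 2 < S →
      c * Real.sqrt D / Real.sqrt ((a * Real.sqrt C - b * Real.sqrt D) ^ 2 + D * c ^ 2)
        ∈ Set.Icc (0:ℝ) 1 ∧
      IsMaxOn γ (Set.Icc (0:ℝ) 1)
        (c * Real.sqrt D / Real.sqrt ((a * Real.sqrt C - b * Real.sqrt D) ^ 2 + D * c ^ 2)) ∧
      γ (c * Real.sqrt D / Real.sqrt ((a * Real.sqrt C - b * Real.sqrt D) ^ 2 + D * c ^ 2))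
        = D * (A + C) * a ^ 2 * c ^ 2
            / ((a * Real.sqrt C - b * Real.sqrt D) ^ 2 + D * c ^ 2)) ∧
    (S ≤ A * a ^ 2 + C * a ^ 2 →
      xhat ∈ Set.Icc (0:ℝ) 1 ∧ IsMaxOn γ (Set.Icc (0:ℝ) 1) xhat ∧
      γ xhat = D * b * c * (k + Real.sqrt (1 / (1 + k ^ 2))
        - k ^ 3 / Real.sqrt (k ^ 2 + k ^ 4)) + D * c ^ 2)) := by
  intro γ k xhat S
  exact helper a b c A C D k xhat S γ rfl rfl rfl rfl ha hb hc hA hC hD hK
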